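/- Let P be a Markov operator associated with a continuous random map f on a compact X, and let F ⊆ X be a minimal closed f-invariant set. If φ ∈ C(X) satisfies Pφ = φ, then φ is constant on F. -/
import Mathlib


open MeasureTheory Filter

/-- If `F` is a minimal closed invariant set of a continuous random map `f` on a compact
metric space, and `φ ∈ C(X)` satisfies `Pφ = φ` for the annealed Koopman operator
`Pφ(x) = ∫ φ(f_ω x) dℙ(ω)`, then `φ` is constant on `F`. -/
theorem markov_fixed_function_constant_on_minimal
    {T : Type*} [MeasurableSpace T]
    {X : Type*} [MetricSpace X] [CompactSpace X] [MeasurableSpace X] [BorelSpace X]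
    (p : MeasureTheory.Measure T) [IsProbabilityMeasure p]
    (ℙ : MeasureTheory.Measure (ℕ → T)) [IsProbabilityMeasure ℙ]
    (hbern : MeasureTheory.Measure.map (fun ω => (ω 0, fun n => ω (n + 1))) ℙ
      = p.prod ℙ)
    (f : T → X → X) (hf : ∀ t, Continuous (f t))
    (hfmeas : Measurable (Function.uncurry f))
    (F : Set X) (hFclosed : IsClosed F) (hFne : F.Nonempty)
    (hFinv : ∀ᵐ ω ∂ℙ, Set.MapsTo (f (ω 0)) F F)
    (hFmin : ∀ F' ⊆ F, IsClosed F' → F'.Nonempty →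
      (∀ᵐ ω ∂ℙ, Set.MapsTo (f (ω 0)) F' F') → F' = F)
    (φ : C(X, ℝ)) (hφ : ∀ x : X, ∫ ω, φ (f (ω 0) x) ∂ℙ = φ x) :
    ∀ x ∈ F, ∀ y ∈ F, φ x = φ y := by
  -- φ attains its minimum m on the compact set F
  obtain ⟨x₀, hx₀F, hmin⟩ :=
    (hFclosed.isCompact).exists_isMinOn hFne (φ.continuous.continuousOn)
  set m : ℝ := φ x₀ with hm
  -- the level set where φ equals its minimum on F
  set F' : Set X := F ∩ φ ⁻¹' {m} with hF'
  have hF'sub : F' ⊆ F := Set.inter_subset_left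
  have hF'closed : IsClosed F' :=
    hFclosed.inter (isClosed_singleton.preimage φ.continuous)
  have hF'ne : F'.Nonempty := ⟨x₀, hx₀F, rfl⟩
  -- measurability of ω ↦ φ (f (ω 0) x)
  have hmeas : ∀ x : X, Measurable fun ω : ℕ → T => φ (f (ω 0) x) := by
    intro x
    exact φ.continuous.measurable.comp
      ((hfmeas.comp (measurable_id.prodMk measurable_const)).comp
        (measurable_pi_apply 0))
  have hint : ∀ x : X, Integrable (fun ω : ℕ → T => φ (f (ω 0) x)) ℙ := by
    intro x
    refine (integrable_const (‖φ‖)).mono' (hmeas x).aestronglyMeasurable ?_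
    exact Eventually.of_forall fun ω => φ.norm_coe_le_norm _
  -- key step: points of F' are a.s. mapped into F'
  have key : ∀ x ∈ F', ∀ᵐ ω ∂ℙ, f (ω 0) x ∈ F' := by
    intro x hx
    have hmem : ∀ᵐ ω ∂ℙ, f (ω 0) x ∈ F := hFinv.mono fun ω h => h hx.1
    have hnn : 0 ≤ᵐ[ℙ] fun ω : ℕ → T => φ (f (ω 0) x) - m :=
      hmem.mono fun ω h => sub_nonneg.2 (hmin h)
    have hinteg : Integrable (fun ω : ℕ → T => φ (f (ω 0) x) - m) ℙ :=
      (hint x).sub (integrable_const m)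
    have hzero : ∫ ω, (φ (f (ω 0) x) - m) ∂ℙ = 0 := by
      rw [integral_sub (hint x) (integrable_const m), hφ x, integral_const]
      have hxm : φ x = m := hx.2
      simp [hxm]
    have := (integral_eq_zero_iff_of_nonneg_ae hnn hinteg).1 hzero
    filter_upwards [hmem, this] with ω h1 h2
    exact ⟨h1, by simpa [sub_eq_zero] using h2⟩
  -- extract a countable dense subset D of F'
  obtain ⟨D₀, hD₀c, hD₀d⟩ := TopologicalSpace.exists_countable_dense F'
  set D : Set X := Subtype.val '' D₀ with hD
  have hDc : D.Countable := hD₀c.image _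
  have hDsub : D ⊆ F' := by rintro _ ⟨⟨z, hz⟩, _, rfl⟩; exact hz
  have hDdense : F' ⊆ closure D := by
    intro x hx
    exact closure_subtype.1 (hD₀d.closure_eq ▸ Set.mem_univ (⟨x, hx⟩ : F'))
  -- a.s., all points of D are mapped into F', hence all of F' by continuity
  have hDae : ∀ᵐ ω ∂ℙ, ∀ x ∈ D, f (ω 0) x ∈ F' :=
    (ae_ball_iff hDc).2 fun x hx => key x (hDsub hx)
  have hF'inv : ∀ᵐ ω ∂ℙ, Set.MapsTo (f (ω 0)) F' F' := by
    filter_upwards [hDae, hFinv] with ω hωD hωF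
    intro x hx
    refine ⟨hωF hx.1, ?_⟩
    have heq : Set.EqOn (fun z => φ (f (ω 0) z)) (fun _ => m) (closure D) :=
      Set.EqOn.closure (fun z hz => (hωD z hz).2)
        (φ.continuous.comp (hf (ω 0))) continuous_const
    exact heq (hDdense hx)
  -- minimality: F' = F, so φ ≡ m on F
  have hFF : F' = F := hFmin F' hF'sub hF'closed hF'ne hF'inv
  intro x hx y hy
  have hxm : φ x = m := (hFF ▸ hx : x ∈ F').2
  have hym : φ y = m := (hFF ▸ hy : y ∈ F').2
  rw [hxm, hym]
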